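/- For every $k \geq 2$ and real $x \geq 1$, $\left|\#\{n \leq x : n \text{ is } k\text{-free}\} - \frac{x}{\zeta(k)}\right| = O(x^{1/k})$. -/

import Mathlib

open scoped Classical
open Finset ArithmeticFunction
open scoped ArithmeticFunction.Moebius ArithmeticFunction.zeta

-- factorization of m := ∏ p ∈ n.primeFactors, p ^ (n.factorization p / k)
lemma fact_m (k n : ℕ) (hn : n ≠ 0) (q : ℕ) :
    (∏ p ∈ n.primeFactors, p ^ (n.factorization p / k)).factorization q
      = n.factorization q / k := by
  rw [Nat.factorization_prod (fun p hp => pow_ne_zero _ (Nat.pos_of_mem_primeFactors hp).ne')]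
  rw [Finsupp.finset_sum_apply]
  have : ∀ p ∈ n.primeFactors, (p ^ (n.factorization p / k)).factorization q
      = if p = q then n.factorization p / k else 0 := by
    intro p hp
    rw [(Nat.prime_of_mem_primeFactors hp).factorization_pow, Finsupp.single_apply]
  rw [Finset.sum_congr rfl this, Finset.sum_ite_eq' n.primeFactors q
    (fun p => n.factorization p / k)]
  by_cases hq : q ∈ n.primeFactors
  · simp [hq]
  · simp only [hq, if_false]
    have : n.factorization q = 0 := by
      rw [← Finsupp.notMem_support_iff, Nat.support_factorization]; exact hq
    simp [this]

lemma kfree_indicator (k : ℕ) (hk : 1 ≤ k) (N n : ℕ) (hn1 : 1 ≤ n) (hnN : n ≤ N) :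
    ∑ d ∈ (Finset.Icc 1 N).filter (fun d => d ^ k ∣ n), μ d
      = if (∀ p : ℕ, p.Prime → ¬ p ^ k ∣ n) then 1 else 0 := by
  have hn0 : n ≠ 0 := by omega
  set m := ∏ p ∈ n.primeFactors, p ^ (n.factorization p / k) with hm
  have hm0 : m ≠ 0 := Finset.prod_ne_zero_iff.2
    (fun p hp => pow_ne_zero _ (Nat.pos_of_mem_primeFactors hp).ne')
  -- d ^ k ∣ n ↔ d ∣ m   (for d ≠ 0)
  have key : ∀ d : ℕ, d ≠ 0 → (d ^ k ∣ n ↔ d ∣ m) := by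
    intro d hd
    rw [← Nat.factorization_le_iff_dvd (pow_ne_zero _ hd) hn0,
        ← Nat.factorization_le_iff_dvd hd hm0, Nat.factorization_pow]
    constructor
    · intro h q
      rw [fact_m k n hn0 q, Nat.le_div_iff_mul_le (by omega), mul_comm]
      simpa using h q
    · intro h q
      have := h q
      rw [fact_m k n hn0 q, Nat.le_div_iff_mul_le (by omega)] at this
      simpa [mul_comm] using this
  -- m ∣ n
  have hmn : m ∣ n := by
    rw [← Nat.factorization_le_iff_dvd hm0 hn0]
    intro q
    rw [fact_m k n hn0 q]
    exact Nat.div_le_self _ _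
  have hdiv : (Finset.Icc 1 N).filter (fun d => d ^ k ∣ n) = m.divisors := by
    ext d
    simp only [Finset.mem_filter, Finset.mem_Icc, Nat.mem_divisors]
    constructor
    · rintro ⟨⟨h1, -⟩, h2⟩
      exact ⟨(key d (by omega)).1 h2, hm0⟩
    · rintro ⟨h1, -⟩
      have hd0 : d ≠ 0 := by rintro rfl; exact hm0 (Nat.eq_zero_of_zero_dvd h1)
      refine ⟨⟨by omega, ?_⟩, (key d hd0).2 h1⟩
      exact le_trans (Nat.le_of_dvd (by omega) (h1.trans hmn)) hnN
  rw [hdiv]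
  have : ∑ d ∈ m.divisors, μ d = (μ * (ζ : ArithmeticFunction ℤ)) m := by
    rw [ArithmeticFunction.coe_mul_zeta_apply]
  rw [this, ArithmeticFunction.moebius_mul_coe_zeta, ArithmeticFunction.one_apply]
  -- m = 1 ↔ k-free
  have hpm : ∀ p : ℕ, p.Prime → (p ∣ m ↔ p ^ k ∣ n) := by
    intro p hp
    rw [hp.dvd_iff_one_le_factorization hm0, fact_m k n hn0 p,
      Nat.le_div_iff_mul_le (by omega : 0 < k), one_mul,
      hp.pow_dvd_iff_le_factorization hn0]
  congr 1
  simp only [eq_iff_iff]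
  rw [Nat.eq_one_iff_not_exists_prime_dvd]
  constructor
  · intro h p hp hd
    exact h p hp ((hpm p hp).2 hd)
  · intro h p hp hd
    exact h p hp ((hpm p hp).1 hd)

lemma count_kfree (k : ℕ) (hk : 1 ≤ k) (N : ℕ) :
    (((Finset.Icc 1 N).filter (fun n => ∀ p : ℕ, p.Prime → ¬ p ^ k ∣ n)).card : ℤ)
      = ∑ d ∈ Finset.Icc 1 N, μ d * ((N / d ^ k : ℕ) : ℤ) := by
  rw [Finset.card_filter]
  rw [Nat.cast_sum]
  have step1 : ∀ n ∈ Finset.Icc 1 N,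
      ((if (∀ p : ℕ, p.Prime → ¬ p ^ k ∣ n) then (1:ℕ) else 0 : ℕ) : ℤ)
        = ∑ d ∈ Finset.Icc 1 N, if d ^ k ∣ n then μ d else 0 := by
    intro n hn
    rw [← Finset.sum_filter]
    rw [Finset.mem_Icc] at hn
    rw [kfree_indicator k hk N n hn.1 hn.2]
    split <;> simp
  rw [Finset.sum_congr rfl step1, Finset.sum_comm]
  refine Finset.sum_congr rfl (fun d hd => ?_)
  rw [← Finset.sum_filter, Finset.sum_const, ← Nat.Ioc_filter_dvd_card_eq_div N (d ^ k)]
  have : Finset.Icc 1 N = Finset.Ioc 0 N := rfl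
  rw [this, nsmul_eq_mul, mul_comm]

lemma hz_summable (k : ℕ) (hk : 2 ≤ k) : Summable (fun d : ℕ => 1 / (d : ℝ) ^ k) :=
  Real.summable_one_div_nat_pow.2 hk

lemma hg_summable (k : ℕ) (hk : 2 ≤ k) : Summable (fun d : ℕ => (μ d : ℝ) / (d : ℝ) ^ k) := by
  apply Summable.of_abs
  apply Summable.of_nonneg_of_le (fun d => abs_nonneg _) _ (hz_summable k hk)
  intro d
  rw [abs_div, abs_pow, Nat.abs_cast]
  rcases Nat.eq_zero_or_pos d with rfl | hd
  · simp
  · have : (0:ℝ) < (d:ℝ) ^ k := by positivity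
    gcongr
    exact_mod_cast (abs_moebius_le_one : |μ d| ≤ 1)


lemma zeta_mul_moebius (k : ℕ) (hk : 2 ≤ k) :
    (∑' d : ℕ, 1 / (d : ℝ) ^ k) * (∑' d : ℕ, (μ d : ℝ) / (d : ℝ) ^ k) = 1 := by
  have hs : (1 : ℝ) < ((k : ℂ)).re := by simp; exact_mod_cast lt_of_lt_of_le one_lt_two hk
  have h := ArithmeticFunction.LSeries_zeta_mul_Lseries_moebius hs
  have hzeq : LSeries (fun n => ((ζ n : ℕ) : ℂ)) (k : ℂ)
      = ((∑' d : ℕ, 1 / (d : ℝ) ^ k : ℝ) : ℂ) := by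
    rw [Complex.ofReal_tsum]
    apply tsum_congr
    intro n
    rcases Nat.eq_zero_or_pos n with rfl | hn
    · simp [LSeries.term, zero_pow (show k ≠ 0 by omega)]
    · rw [LSeries.term_of_ne_zero (by omega : n ≠ 0), ArithmeticFunction.zeta_apply,
        if_neg (by omega : ¬ n = 0), show ((k:ℂ)) = ((k:ℕ):ℂ) from rfl, Complex.cpow_natCast]
      push_cast
      ring
  have hmeq : LSeries (fun n => ((μ n : ℤ) : ℂ)) (k : ℂ)
      = ((∑' d : ℕ, (μ d : ℝ) / (d : ℝ) ^ k : ℝ) : ℂ) := by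
    rw [Complex.ofReal_tsum]
    apply tsum_congr
    intro n
    rcases Nat.eq_zero_or_pos n with rfl | hn
    · simp [LSeries.term, zero_pow (show k ≠ 0 by omega), ArithmeticFunction.map_zero]
    · rw [LSeries.term_of_ne_zero (by omega : n ≠ 0), show ((k:ℂ)) = ((k:ℕ):ℂ) from rfl,
        Complex.cpow_natCast]
      push_cast
      ring
  rw [hzeq, hmeq, ← Complex.ofReal_mul] at h
  exact_mod_cast h

lemma tele (k : ℕ) (hk : 2 ≤ k) (c : ℝ) (hc : 1 ≤ c) :
    ((k:ℝ) - 1) * (1 / (c+1)^k) ≤ 1 / c^(k-1) - 1 / (c+1)^(k-1) := by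
  set m := k - 1 with hm
  have hm1 : 1 ≤ m := by omega
  have hkm : k = m + 1 := by omega
  have hc0 : (0:ℝ) < c := lt_of_lt_of_le one_pos hc
  have hc1 : (0:ℝ) < c + 1 := by linarith
  have hkr : ((k:ℝ) - 1) = (m:ℝ) := by rw [hkm]; push_cast; ring
  -- key: (c+1)^m - c^m ≥ m * c^(m-1)
  have h1 : (m:ℝ) * c^(m-1) ≤ (c+1)^m - c^m := by
    have hgs : (∑ i ∈ range m, (c+1)^i * c^(m-1-i)) * ((c+1) - c) = (c+1)^m - c^m :=
      geom_sum₂_mul (c+1) c m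
    rw [show (c+1) - c = 1 by ring, mul_one] at hgs
    rw [← hgs]
    calc (m:ℝ) * c^(m-1) = ∑ _i ∈ range m, c^(m-1) := by rw [Finset.sum_const, card_range,
          nsmul_eq_mul]
      _ ≤ ∑ i ∈ range m, (c+1)^i * c^(m-1-i) := by
          apply Finset.sum_le_sum
          intro i hi
          rw [Finset.mem_range] at hi
          have : c^(m-1) = c^i * c^(m-1-i) := by rw [← pow_add]; congr 1; omega
          rw [this]
          apply mul_le_mul_of_nonneg_right _ (by positivity)
          exact pow_le_pow_left₀ (le_of_lt hc0) (by linarith) i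
  rw [hkr, mul_one_div]
  have key : 1 / c^m - 1/(c+1)^m = ((c+1)^m - c^m) / (c^m * (c+1)^m) := by
    field_simp
  rw [key, div_le_div_iff₀ (by positivity) (by positivity)]
  have hck : (c+1)^k = (c+1)^m * (c+1) := by rw [hkm, pow_succ]
  have hcm : c^m = c^(m-1) * c := by rw [← pow_succ]; congr 1; omega
  calc (m:ℝ) * (c^m * (c+1)^m) = (↑m * c^(m-1) * (c+1)^m) * c := by rw [hcm]; ring
    _ ≤ (↑m * c^(m-1) * (c+1)^m) * (c+1) := by
        apply mul_le_mul_of_nonneg_left (by linarith) (by positivity)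
    _ = (↑m * c^(m-1)) * ((c+1)^m * (c+1)) := by ring
    _ ≤ ((c+1)^m - c^m) * ((c+1)^m * (c+1)) := by
        apply mul_le_mul_of_nonneg_right h1 (by positivity)
    _ = ((c+1)^m - c^m) * (c+1)^k := by rw [hck]

lemma tail_bound (k : ℕ) (hk : 2 ≤ k) (B : ℕ) (hB : 2 ≤ B) :
    ∑' i : ℕ, 1 / ((i + B : ℕ) : ℝ) ^ k ≤ 1 / (((B:ℝ) - 1)) ^ (k-1) := by
  have hB2 : (2:ℝ) ≤ (B:ℝ) := by exact_mod_cast hB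
  set a : ℕ → ℝ := fun m => 1 / ((B:ℝ) - 1 + m) ^ (k-1) with ha
  have hbase : ∀ m : ℕ, (1:ℝ) ≤ (B:ℝ) - 1 + m := by
    intro m
    have : (0:ℝ) ≤ (m:ℝ) := Nat.cast_nonneg m
    linarith
  have hmono : ∀ i : ℕ, a (i+1) ≤ a i := by
    intro i
    apply one_div_le_one_div_of_le
    · have := hbase i; positivity
    · apply pow_le_pow_left₀ (by have := hbase i; linarith)
      push_cast; linarith
  have hnn : ∀ i : ℕ, 0 ≤ a i - a (i+1) := fun i => sub_nonneg.2 (hmono i)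
  have hlim : Filter.Tendsto a Filter.atTop (nhds 0) := by
    have h1 : Filter.Tendsto (fun m : ℕ => ((B:ℝ) - 1 + m) ^ (k-1))
        Filter.atTop Filter.atTop := by
      apply (Filter.tendsto_pow_atTop (by omega : k - 1 ≠ 0)).comp
      exact Filter.tendsto_atTop_add_const_left _ _ tendsto_natCast_atTop_atTop
    have := h1.inv_tendsto_atTop
    simpa [ha, one_div, Pi.inv_def] using this
  have hsum : HasSum (fun i => a i - a (i+1)) (a 0) := by
    rw [hasSum_iff_tendsto_nat_of_nonneg hnn]
    have heq : ∀ n : ℕ, ∑ i ∈ range n, (a i - a (i+1)) = a 0 - a n :=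
      fun n => Finset.sum_range_sub' a n
    simp_rw [heq]
    simpa using (tendsto_const_nhds.sub hlim)
  have hterm : ∀ i : ℕ, 1 / ((i + B : ℕ) : ℝ) ^ k ≤ a i - a (i+1) := by
    intro i
    have hc1 : (1:ℝ) ≤ (B:ℝ) - 1 + i := hbase i
    have htele := tele k hk ((B:ℝ) - 1 + i) hc1
    have hk1 : (1:ℝ) ≤ (k:ℝ) - 1 := by
      have : (2:ℝ) ≤ (k:ℝ) := by exact_mod_cast hk
      linarith
    have hca : ((i + B : ℕ) : ℝ) = ((B:ℝ) - 1 + i) + 1 := by push_cast; ring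
    have hpos : (0:ℝ) ≤ 1 / (((B:ℝ) - 1 + i) + 1) ^ k := by positivity
    rw [hca]
    calc 1 / (((B:ℝ) - 1 + i) + 1) ^ k = 1 * (1 / (((B:ℝ) - 1 + i) + 1) ^ k) := by ring
      _ ≤ ((k:ℝ) - 1) * (1 / (((B:ℝ) - 1 + i) + 1) ^ k) :=
          mul_le_mul_of_nonneg_right hk1 hpos
      _ ≤ 1 / ((B:ℝ) - 1 + i) ^ (k-1) - 1 / (((B:ℝ) - 1 + i) + 1) ^ (k-1) := htele
      _ = a i - a (i+1) := by simp only [ha]; push_cast; ring_nf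
  have hsummable : Summable (fun i : ℕ => 1 / ((i + B : ℕ) : ℝ) ^ k) := by
    have := (summable_nat_add_iff (f := fun d : ℕ => 1 / (d:ℝ) ^ k) B).2
      (Real.summable_one_div_nat_pow.2 hk)
    simpa using this
  have hle := Summable.tsum_le_tsum hterm hsummable hsum.summable
  rw [hsum.tsum_eq] at hle
  apply hle.trans
  simp [ha]

lemma pow_tail_helper (k : ℕ) (hk : 2 ≤ k) (t y : ℝ) (ht : 1 ≤ t) (hy : t / 2 ≤ y) :
    t ^ k * (1 / y ^ (k-1)) ≤ 2 ^ (k-1) * t := by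
  have ht0 : (0:ℝ) < t := by linarith
  have hy0 : (0:ℝ) < y := by linarith
  have h1 : (t/2) ^ (k-1) ≤ y ^ (k-1) := pow_le_pow_left₀ (by linarith) hy _
  have h2 : (0:ℝ) < (t/2) ^ (k-1) := by positivity
  have htk : t ^ k = t ^ (k-1) * t := by
    rw [← pow_succ]; congr 1; omega
  calc t ^ k * (1 / y ^ (k-1)) ≤ t ^ k * (1 / (t/2) ^ (k-1)) := by
        apply mul_le_mul_of_nonneg_left (one_div_le_one_div_of_le h2 h1) (by positivity)
    _ = 2 ^ (k-1) * t := by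
        rw [htk, div_pow]
        have hne : t ^ (k-1) ≠ 0 := by positivity
        field_simp

theorem stmt_18 (k : ℕ) (hk : 2 ≤ k) :
    ∃ C > 0, ∀ x : ℝ, 1 ≤ x →
      |(((Finset.Icc 1 ⌊x⌋₊).filter
          (fun n => ∀ p : ℕ, p.Prime → ¬ p ^ k ∣ n)).card : ℝ) -
        x / (∑' n : ℕ, 1 / ((n : ℝ) + 1) ^ k)| ≤
      C * x ^ ((1 : ℝ) / k) := by
  have hk0 : (k:ℝ) ≠ 0 := by positivity
  set z : ℕ → ℝ := fun d => 1 / (d : ℝ) ^ k with hzdef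
  set g : ℕ → ℝ := fun d => (μ d : ℝ) / (d : ℝ) ^ k with hgdef
  have hz := hz_summable k hk
  have hg := hg_summable k hk
  have hgz : ∀ d : ℕ, |g d| ≤ z d := by
    intro d
    simp only [hgdef, hzdef, abs_div, abs_pow, Nat.abs_cast]
    rcases Nat.eq_zero_or_pos d with rfl | hd
    · simp
    · have : (0:ℝ) < (d:ℝ) ^ k := by positivity
      gcongr
      exact_mod_cast (abs_moebius_le_one : |μ d| ≤ 1)
  have hmul := zeta_mul_moebius k hk
  have hzk0 : (∑' d : ℕ, z d) ≠ 0 := by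
    intro h
    rw [hzdef] at h
    rw [h, zero_mul] at hmul
    exact zero_ne_one hmul
  have hSz : (∑' n : ℕ, 1 / ((n : ℝ) + 1) ^ k) = ∑' d : ℕ, z d := by
    rw [Summable.tsum_eq_zero_add hz]
    simp only [hzdef, Nat.cast_zero, zero_pow (show k ≠ 0 by omega), div_zero, zero_add]
    apply tsum_congr
    intro n
    push_cast
    ring_nf
  have hMk : (1:ℝ) / (∑' d : ℕ, z d) = ∑' d : ℕ, g d :=
    (eq_one_div_of_mul_eq_one_left (by rw [mul_comm] at hmul; exact hmul)).symm
  refine ⟨2^k + 2, by positivity, fun x hx => ?_⟩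
  set N := ⌊x⌋₊ with hN
  have hN1 : 1 ≤ N := Nat.le_floor (by exact_mod_cast hx)
  have hNx : (N:ℝ) ≤ x := Nat.floor_le (by linarith)
  have hxN : x < (N:ℝ) + 1 := Nat.lt_floor_add_one x
  have hxk1 : (1:ℝ) ≤ x ^ ((1:ℝ)/k) := Real.one_le_rpow hx (by positivity)
  have hxk0 : (0:ℝ) < x ^ ((1:ℝ)/k) := by linarith
  -- the counting identity, in ℝ
  have hcount : (((Finset.Icc 1 N).filter
      (fun n => ∀ p : ℕ, p.Prime → ¬ p ^ k ∣ n)).card : ℝ)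
      = ∑ d ∈ Finset.Icc 1 N, (μ d : ℝ) * ((N / d ^ k : ℕ) : ℝ) := by
    have h := count_kfree k (by omega) N
    calc (((Finset.Icc 1 N).filter
        (fun n => ∀ p : ℕ, p.Prime → ¬ p ^ k ∣ n)).card : ℝ)
        = ((((Finset.Icc 1 N).filter
            (fun n => ∀ p : ℕ, p.Prime → ¬ p ^ k ∣ n)).card : ℤ) : ℝ) := by push_cast; ring
      _ = ((∑ d ∈ Finset.Icc 1 N, μ d * ((N / d ^ k : ℕ) : ℤ) : ℤ) : ℝ) := by rw [h]
      _ = ∑ d ∈ Finset.Icc 1 N, (μ d : ℝ) * ((N / d ^ k : ℕ) : ℝ) := by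
          rw [Int.cast_sum]
          exact Finset.sum_congr rfl fun d _ => by rw [Int.cast_mul, Int.cast_natCast]
  -- restrict the sum
  set T := (Finset.Icc 1 N).filter (fun d => d ^ k ≤ N) with hT
  have hsumT : ∑ d ∈ Finset.Icc 1 N, (μ d : ℝ) * ((N / d ^ k : ℕ) : ℝ)
      = ∑ d ∈ T, (μ d : ℝ) * ((N / d ^ k : ℕ) : ℝ) := by
    rw [eq_comm]
    apply Finset.sum_subset (Finset.filter_subset _ _)
    intro d hd hdT
    have hnd : ¬ d ^ k ≤ N := fun h => hdT (Finset.mem_filter.2 ⟨hd, h⟩)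
    rw [Nat.div_eq_of_lt (by omega)]
    simp
  -- least B with 2 ≤ B and N < B ^ k
  have hPex : ∃ d : ℕ, 2 ≤ d ∧ N < d ^ k := by
    refine ⟨N + 2, by omega, ?_⟩
    calc N < N + 2 := by omega
      _ ≤ (N + 2) ^ k := Nat.le_self_pow (by omega) _
  set B := Nat.find hPex with hBdef
  have hB2 : 2 ≤ B := (Nat.find_spec hPex).1
  have hBk : N < B ^ k := (Nat.find_spec hPex).2
  have hg' : Summable g := hg
  have hz' : Summable z := hz
  have hsplit := Summable.sum_add_tsum_subtype_compl hg' T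
  set tail := ∑' (d : {x : ℕ // x ∉ T}), g ↑d with htail
  -- rewrite the goal
  rw [hSz, hcount, hsumT]
  have hdivg : x / (∑' d : ℕ, z d) = x * ∑' d : ℕ, g d := by
    rw [div_eq_mul_one_div, hMk]
  rw [hdivg, ← hsplit]
  have hre : ∑ d ∈ T, (μ d : ℝ) * ((N / d ^ k : ℕ) : ℝ)
      - x * (∑ d ∈ T, g d + tail)
      = (∑ d ∈ T, ((μ d : ℝ) * ((N / d ^ k : ℕ) : ℝ) - x * g d)) - x * tail := by
    rw [Finset.sum_sub_distrib, ← Finset.mul_sum]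
    ring
  rw [hre]
  -- per-term bound on T
  have hterm2 : ∀ d ∈ T, |(μ d : ℝ) * ((N / d ^ k : ℕ) : ℝ) - x * g d| ≤ 2 := by
    intro d hd
    rw [hT, Finset.mem_filter, Finset.mem_Icc] at hd
    obtain ⟨⟨hd1, hdN⟩, hdk⟩ := hd
    set q : ℝ := ((d:ℝ)) ^ k with hq
    have hq1 : (1:ℝ) ≤ q := one_le_pow₀ (by exact_mod_cast hd1)
    have hq0 : (0:ℝ) < q := by linarith
    have hcast : ((d ^ k : ℕ) : ℝ) = q := by push_cast; rfl
    have h_up : ((N / d ^ k : ℕ) : ℝ) ≤ x / q := by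
      calc ((N / d ^ k : ℕ) : ℝ) ≤ (N : ℝ) / ((d ^ k : ℕ) : ℝ) := Nat.cast_div_le
        _ = (N : ℝ) / q := by rw [hcast]
        _ ≤ x / q := by gcongr
    have hmodlt : N < d ^ k * (N / d ^ k) + d ^ k := by
      conv_lhs => rw [← Nat.div_add_mod N (d ^ k)]
      have : N % d ^ k < d ^ k := Nat.mod_lt _ (by positivity)
      omega
    have h_low : x / q ≤ ((N / d ^ k : ℕ) : ℝ) + 2 := by
      rw [div_le_iff₀ hq0]
      have hc : (N : ℝ) < q * ((N / d ^ k : ℕ) : ℝ) + q := by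
        have := hmodlt
        have hcc : ((d ^ k * (N / d ^ k) + d ^ k : ℕ) : ℝ)
            = q * ((N / d ^ k : ℕ) : ℝ) + q := by push_cast [hq]; ring
        calc (N:ℝ) < ((d ^ k * (N / d ^ k) + d ^ k : ℕ) : ℝ) := by exact_mod_cast this
          _ = _ := hcc
      have hnn : (0:ℝ) ≤ ((N / d ^ k : ℕ) : ℝ) := Nat.cast_nonneg _
      nlinarith
    have hgd : g d = (μ d : ℝ) / q := by rw [hgdef]
    rw [hgd]
    have heq : (μ d : ℝ) * ((N / d ^ k : ℕ) : ℝ) - x * ((μ d : ℝ) / q)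
        = (μ d : ℝ) * (((N / d ^ k : ℕ) : ℝ) - x / q) := by ring
    rw [heq, abs_mul]
    have hmu : |(μ d : ℝ)| ≤ 1 := by exact_mod_cast (abs_moebius_le_one : |μ d| ≤ 1)
    have habs2 : |((N / d ^ k : ℕ) : ℝ) - x / q| ≤ 2 := by
      rw [abs_le]; constructor <;> linarith
    calc |(μ d : ℝ)| * |((N / d ^ k : ℕ) : ℝ) - x / q| ≤ 1 * 2 :=
        mul_le_mul hmu habs2 (abs_nonneg _) zero_le_one
      _ = 2 := by ring
  -- cardinality of T
  have hTcard : (T.card : ℝ) ≤ x ^ ((1:ℝ)/k) := by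
    have hsub : T ⊆ Finset.Icc 1 ⌊x ^ ((1:ℝ)/k)⌋₊ := by
      intro d hd
      rw [hT, Finset.mem_filter, Finset.mem_Icc] at hd
      obtain ⟨⟨hd1, hdN⟩, hdk⟩ := hd
      rw [Finset.mem_Icc]
      refine ⟨hd1, Nat.le_floor ?_⟩
      have hdx : ((d:ℝ)) ^ k ≤ x := by
        calc ((d:ℝ)) ^ k = ((d ^ k : ℕ) : ℝ) := by push_cast; rfl
          _ ≤ (N : ℝ) := by exact_mod_cast hdk
          _ ≤ x := hNx
      have hid : (d:ℝ) = (((d:ℝ)) ^ k) ^ ((1:ℝ)/k) := by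
        rw [← Real.rpow_natCast (d:ℝ) k, ← Real.rpow_mul (Nat.cast_nonneg d),
          mul_one_div, div_self hk0, Real.rpow_one]
      rw [hid]
      exact Real.rpow_le_rpow (by positivity) hdx (by positivity)
    have hcard2 : (T.card : ℝ) ≤ ((Finset.Icc 1 ⌊x ^ ((1:ℝ)/k)⌋₊).card : ℝ) := by
      exact_mod_cast Finset.card_le_card hsub
    calc (T.card : ℝ) ≤ ((Finset.Icc 1 ⌊x ^ ((1:ℝ)/k)⌋₊).card : ℝ) := hcard2
      _ = (⌊x ^ ((1:ℝ)/k)⌋₊ : ℝ) := by rw [Nat.card_Icc]; norm_num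
      _ ≤ x ^ ((1:ℝ)/k) := Nat.floor_le (by positivity)
  -- sum bound
  have hsumbound : |∑ d ∈ T, ((μ d : ℝ) * ((N / d ^ k : ℕ) : ℝ) - x * g d)|
      ≤ 2 * x ^ ((1:ℝ)/k) := by
    calc |∑ d ∈ T, ((μ d : ℝ) * ((N / d ^ k : ℕ) : ℝ) - x * g d)|
        ≤ ∑ d ∈ T, |(μ d : ℝ) * ((N / d ^ k : ℕ) : ℝ) - x * g d| :=
          Finset.abs_sum_le_sum_abs _ _
      _ ≤ ∑ _d ∈ T, (2:ℝ) := Finset.sum_le_sum hterm2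
      _ = (T.card : ℝ) * 2 := by rw [Finset.sum_const, nsmul_eq_mul]
      _ ≤ x ^ ((1:ℝ)/k) * 2 := mul_le_mul_of_nonneg_right hTcard (by norm_num)
      _ = 2 * x ^ ((1:ℝ)/k) := by ring
  -- tail bound
  have htail_abs : |tail| ≤ 1 / ((B:ℝ) - 1) ^ (k-1) := by
    have hsub_abs : Summable (fun d : {x : ℕ // x ∉ T} => |g ↑d|) :=
      (hg'.abs).subtype _
    have h1 : |tail| ≤ ∑' (d : {x : ℕ // x ∉ T}), |g ↑d| := by
      rw [htail]
      simpa [Real.norm_eq_abs] using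
        norm_tsum_le_tsum_norm (f := fun d : {x : ℕ // x ∉ T} => g ↑d)
          (by simpa [Real.norm_eq_abs] using hsub_abs)
    set w : ℕ → ℝ := fun d => if B ≤ d then z d else 0 with hw
    have hznn : ∀ d : ℕ, 0 ≤ z d := by intro d; rw [hzdef]; positivity
    have hwle : ∀ d : ℕ, w d ≤ z d := by
      intro d; rw [hw]; dsimp only; split
      · exact le_refl _
      · exact hznn d
    have hwnn : ∀ d : ℕ, 0 ≤ w d := by
      intro d; rw [hw]; dsimp only; split
      · exact hznn d
      · exact le_refl _
    have hwsum : Summable w := Summable.of_nonneg_of_le hwnn hwle hz'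
    have h2 : (∑' (d : {x : ℕ // x ∉ T}), |g ↑d|)
        = ∑' d : ℕ, Set.indicator {x : ℕ | x ∉ T} (fun d => |g d|) d :=
      by exact _root_.tsum_subtype {x : ℕ | x ∉ T} (fun d => |g d|)
    have h3 : ∀ d : ℕ, Set.indicator {x : ℕ | x ∉ T} (fun d => |g d|) d ≤ w d := by
      intro d
      by_cases hdT : d ∈ T
      · rw [Set.indicator_of_notMem (by simpa using hdT)]
        exact hwnn d
      · rw [Set.indicator_of_mem (by simpa using hdT)]
        rcases Nat.eq_zero_or_pos d with rfl | hd1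
        · have : g 0 = 0 := by
            rw [hgdef]; simp
          rw [this, abs_zero]; exact hwnn 0
        · have hPd : 2 ≤ d ∧ N < d ^ k := by
            by_cases hdN : d ≤ N
            · have hmem : d ∈ Finset.Icc 1 N := Finset.mem_Icc.2 ⟨hd1, hdN⟩
              have hnk : ¬ d ^ k ≤ N := fun h => hdT (Finset.mem_filter.2 ⟨hmem, h⟩)
              have hd2 : 2 ≤ d := by
                by_contra hcon
                have hd1' : d = 1 := by omega
                subst hd1'
                exact hnk (by simpa using hN1)
              exact ⟨hd2, by omega⟩
            · have : N < d := by omega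
              exact ⟨by omega, lt_of_lt_of_le this (Nat.le_self_pow (by omega) d)⟩
          have hBd : B ≤ d := Nat.find_min' hPex hPd
          have : w d = z d := by rw [hw]; simp [hBd]
          rw [this]
          exact hgz d
    have hindsum : Summable (fun d : ℕ => Set.indicator {x : ℕ | x ∉ T} (fun d => |g d|) d) := by
      rw [← summable_subtype_iff_indicator]
      exact hsub_abs
    have h4 : (∑' d : ℕ, Set.indicator {x : ℕ | x ∉ T} (fun d => |g d|) d) ≤ ∑' d, w d :=
      Summable.tsum_le_tsum h3 hindsum hwsum
    have h5 : (∑' d, w d) = ∑' i : ℕ, z (i + B) := by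
      rw [← Summable.sum_add_tsum_nat_add B hwsum]
      have hz0 : ∑ i ∈ Finset.range B, w i = 0 := by
        apply Finset.sum_eq_zero
        intro i hi
        rw [Finset.mem_range] at hi
        rw [hw]; simp [Nat.not_le.2 hi]
      rw [hz0, zero_add]
      apply tsum_congr
      intro i
      rw [hw]; simp [Nat.le_add_left B i]
    have h6 : (∑' i : ℕ, z (i + B)) ≤ 1 / ((B:ℝ) - 1) ^ (k-1) := by
      have := tail_bound k hk B hB2
      simpa [hzdef] using this
    calc |tail| ≤ ∑' (d : {x : ℕ // x ∉ T}), |g ↑d| := h1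
      _ = _ := h2
      _ ≤ ∑' d, w d := h4
      _ = ∑' i : ℕ, z (i + B) := h5
      _ ≤ 1 / ((B:ℝ) - 1) ^ (k-1) := h6
  -- x * tail bound
  have hxtail : |x * tail| ≤ 2 ^ k * x ^ ((1:ℝ)/k) := by
    set t := x ^ ((1:ℝ)/k) with ht
    have ht1 : (1:ℝ) ≤ t := hxk1
    have htB : t ≤ (B:ℝ) := by
      have hxB : x ≤ ((B:ℝ)) ^ k := by
        have : (N:ℝ) + 1 ≤ ((B ^ k : ℕ) : ℝ) := by exact_mod_cast hBk
        push_cast at this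
        linarith
      calc t = x ^ ((1:ℝ)/k) := rfl
        _ ≤ (((B:ℝ)) ^ k) ^ ((1:ℝ)/k) := Real.rpow_le_rpow (by linarith) hxB (by positivity)
        _ = (B:ℝ) := by
            rw [← Real.rpow_natCast ((B:ℝ)) k, ← Real.rpow_mul (Nat.cast_nonneg B),
              mul_one_div, div_self hk0, Real.rpow_one]
    have hy1 : (1:ℝ) ≤ (B:ℝ) - 1 := by
      have : (2:ℝ) ≤ (B:ℝ) := by exact_mod_cast hB2
      linarith
    have hhalf : t / 2 ≤ (B:ℝ) - 1 := by
      have : (2:ℝ) ≤ (B:ℝ) := by exact_mod_cast hB2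
      linarith
    have hxt : x = t ^ k := by
      rw [ht, ← Real.rpow_natCast (x ^ ((1:ℝ)/k)) k, ← Real.rpow_mul (by linarith),
        one_div_mul_cancel hk0, Real.rpow_one]
    calc |x * tail| = x * |tail| := by
          rw [abs_mul, abs_of_nonneg (by linarith : (0:ℝ) ≤ x)]
      _ ≤ x * (1 / ((B:ℝ) - 1) ^ (k-1)) := by
          apply mul_le_mul_of_nonneg_left htail_abs (by linarith)
      _ = t ^ k * (1 / ((B:ℝ) - 1) ^ (k-1)) := by rw [← hxt]
      _ ≤ 2 ^ (k-1) * t := pow_tail_helper k hk t ((B:ℝ) - 1) ht1 hhalf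
      _ ≤ 2 ^ k * t := by
          apply mul_le_mul_of_nonneg_right _ (by linarith)
          apply pow_le_pow_right₀ (by norm_num) (by omega)
  -- combine
  calc |(∑ d ∈ T, ((μ d : ℝ) * ((N / d ^ k : ℕ) : ℝ) - x * g d)) - x * tail|
      ≤ |∑ d ∈ T, ((μ d : ℝ) * ((N / d ^ k : ℕ) : ℝ) - x * g d)| + |x * tail| :=
        abs_sub _ _
    _ ≤ 2 * x ^ ((1:ℝ)/k) + 2 ^ k * x ^ ((1:ℝ)/k) := add_le_add hsumbound hxtail
    _ = (2 ^ k + 2) * x ^ ((1:ℝ)/k) := by ring
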